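/- Let λ be an n-partition, let T be a semistandard tableau of shape λ, and let (j,i) be a box of λ. Let T′ be the tableau obtained by removing the first j−1 columns from the remnant tableau T^{(j;i)}. Then the scanning value S(T;j,i) equals m(T′), the maximum of the values at the bottoms of the columns of T′. -/

import Mathlib

/-
Common combinatorial set-up for "Tableaux for Key Polynomials, Demazure
Characters, and Atoms" (Proctor–Willis).

Conventions: a box `(j, i)` means column `j`, row `i`, both 1-indexed.
Partial (remnant) tableaux are encoded by their column-length functions
`c : ℕ → ℕ` (each column of a remnant is a top segment of the original
column), together with the ambient value function `T : ℕ → ℕ → ℕ`.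
-/

open scoped BigOperators Classical

noncomputable section

namespace KeyPoly

open MvPolynomial

/-- An `n`-partition `λ = (λ_1, …, λ_n)` with `λ_1 ≥ … ≥ λ_n ≥ 0`,
recorded as a function on `1, …, n`, vanishing beyond `n`. -/
structure NPartition (n : ℕ) where
  part : ℕ → ℕ
  antitone : ∀ ⦃i j : ℕ⦄, 1 ≤ i → i ≤ j → part j ≤ part i
  outside : ∀ i : ℕ, n < i → part i = 0

variable {n : ℕ}

/-- The column length `ζ_j` of the Young diagram of `λ`. -/
def zeta (lam : NPartition n) (j : ℕ) : ℕ :=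
  ((Finset.Icc 1 n).filter fun i => j ≤ lam.part i).card

/-- The box `(j,i)` (column `j`, row `i`) belongs to the diagram of `λ`. -/
def InShape (lam : NPartition n) (j i : ℕ) : Prop :=
  1 ≤ j ∧ 1 ≤ i ∧ i ≤ n ∧ j ≤ lam.part i

/-- The boxes of the diagram of `λ`, as a finite set of pairs (column, row). -/
def boxes (lam : NPartition n) : Finset (ℕ × ℕ) :=
  (Finset.Icc 1 (lam.part 1) ×ˢ Finset.Icc 1 n).filter fun b => b.1 ≤ lam.part b.2

/-- `T` is a semistandard tableau of shape `λ` with values in `[1,n]`: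
rows weakly increase eastward, columns strictly increase southward. -/
def IsSSYT (lam : NPartition n) (T : ℕ → ℕ → ℕ) : Prop :=
  (∀ j i, InShape lam j i → 1 ≤ T j i ∧ T j i ≤ n) ∧
  (∀ j i, InShape lam (j + 1) i → T j i ≤ T (j + 1) i) ∧
  (∀ j i, InShape lam j (i + 1) → T j i < T j (i + 1))

/-- Normalization: the filling vanishes outside the shape. -/
def ZeroOutside (lam : NPartition n) (T : ℕ → ℕ → ℕ) : Prop :=
  ∀ j i, ¬ InShape lam j i → T j i = 0

/-- `T(l, k+1)`, with the boundary convention `n+1` when `k = ζ_l`. -/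
def south (lam : NPartition n) (T : ℕ → ℕ → ℕ) (l k : ℕ) : ℕ :=
  if InShape lam l (k + 1) then T l (k + 1) else n + 1

/-- `T(l+1, k)`, with the boundary convention `n` when `l = λ_k`. -/
def east (lam : NPartition n) (T : ℕ → ℕ → ℕ) (l k : ℕ) : ℕ :=
  if InShape lam (l + 1) k then T (l + 1) k else n

/-- An `n`-permutation: a tuple `(p 1, …, p n)` of distinct entries from `[1,n]`. -/
def IsNPerm (n : ℕ) (p : ℕ → ℕ) : Prop :=
  Set.BijOn p (Set.Icc 1 n) (Set.Icc 1 n)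

/-- The `λ`-key `Y_λ(π)`: column `j` is `π_1, …, π_{ζ_j}` sorted increasingly
(from top to bottom); zero outside the shape. -/
def keyTab (lam : NPartition n) (p : ℕ → ℕ) (j i : ℕ) : ℕ :=
  if InShape lam j i then
    (((Finset.Icc 1 (zeta lam j)).image p).sort (· ≤ ·)).getD (i - 1) 0
  else 0

/-- A semistandard `T` is a key if the values of each column contain the
values of every column to its east. -/
def colSet (lam : NPartition n) (T : ℕ → ℕ → ℕ) (j : ℕ) : Finset ℕ :=
  (Finset.Icc 1 (zeta lam j)).image (T j)

def IsKey (lam : NPartition n) (T : ℕ → ℕ → ℕ) : Prop :=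
  ∀ j j' : ℕ, 1 ≤ j → j ≤ j' → j' ≤ lam.part 1 → colSet lam T j' ⊆ colSet lam T j

/-! ### The (right) scanning method -/

/-- The next column of the scanning path: the earliest column `h' > h`
(up to `maxCol`) whose column bottom in the remnant `c` is nonempty and has
value weakly larger than the bottom value of column `h`. -/
def nextCol (T : ℕ → ℕ → ℕ) (c : ℕ → ℕ) (maxCol h : ℕ) : Option ℕ :=
  (List.range' (h + 1) (maxCol - h)).find?
    (fun h' => decide (0 < c h' ∧ T h (c h) ≤ T h' (c h')))

/-- Columns of the scanning path (EWIS of column bottoms) starting at column `h`,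
with explicit fuel. -/
def pathColsAux (T : ℕ → ℕ → ℕ) (c : ℕ → ℕ) (maxCol : ℕ) : ℕ → ℕ → List ℕ
  | 0, h => [h]
  | fuel + 1, h =>
    match nextCol T c maxCol h with
    | none => [h]
    | some h' => h :: pathColsAux T c maxCol fuel h'

/-- Columns of the scanning path starting at the bottom of column `j` of the
remnant with column lengths `c`. -/
def pathCols (T : ℕ → ℕ → ℕ) (c : ℕ → ℕ) (maxCol j : ℕ) : List ℕ :=
  pathColsAux T c maxCol maxCol j

/-- Remove the scanning path starting in column `j` from the remnant `c`. -/
def removePath (T : ℕ → ℕ → ℕ) (c : ℕ → ℕ) (maxCol j : ℕ) : ℕ → ℕ :=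
  fun h => if h ∈ pathCols T c maxCol j then c h - 1 else c h

/-- Iterate path removal `r` times, always starting from column `j`. -/
def remnantIter (T : ℕ → ℕ → ℕ) (c0 : ℕ → ℕ) (maxCol j : ℕ) : ℕ → ℕ → ℕ
  | 0 => c0
  | r + 1 => removePath T (remnantIter T c0 maxCol j r) maxCol j

/-- Column lengths of the remnant tableau `T^{(j;i)}`. -/
def remnant (lam : NPartition n) (T : ℕ → ℕ → ℕ) (j i : ℕ) : ℕ → ℕ :=
  remnantIter T (zeta lam) (lam.part 1) j (zeta lam j - i)

/-- The scanning path `P(T; j, i)`, recorded by its list of columns. -/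
def scanPath (lam : NPartition n) (T : ℕ → ℕ → ℕ) (j i : ℕ) : List ℕ :=
  pathCols T (remnant lam T j i) (lam.part 1) j

/-- The scanning value `S(T; j, i)`: the last value of the EWIS from `(j,i)`. -/
def scanValue (lam : NPartition n) (T : ℕ → ℕ → ℕ) (j i : ℕ) : ℕ :=
  T ((scanPath lam T j i).getLastD j)
    (remnant lam T j i ((scanPath lam T j i).getLastD j))

/-- The box `(l,k)` lies on the scanning path `P(T; j, i)`. -/
def InScanPath (lam : NPartition n) (T : ℕ → ℕ → ℕ) (j i l k : ℕ) : Prop :=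
  l ∈ scanPath lam T j i ∧ k = remnant lam T j i l

/-- `m(U)` where `U` is the remnant with column lengths `c` restricted to the
columns `l+1, …, maxCol`:  the maximum of the column-bottom values, with the
convention `m((())) = 1` for the empty tableau. -/
def mEast (T : ℕ → ℕ → ℕ) (c : ℕ → ℕ) (maxCol l : ℕ) : ℕ :=
  max 1 (((Finset.Icc (l + 1) maxCol).filter fun h => 0 < c h).sup fun h => T h (c h))

/-! ### The condition sets A, C, and B -/

/-- The set `A_λ(T, π; l, k)`. -/
def Aset (lam : NPartition n) (T : ℕ → ℕ → ℕ) (p : ℕ → ℕ) (l k : ℕ) : Set ℕ :=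
  if keyTab lam p l k < mEast T (remnant lam T l k) (lam.part 1) l then (∅ : Set ℕ)
  else Set.Icc k (min (keyTab lam p l k) (min (south lam T l k - 1) (east lam T l k)))

/-- The set `C_λ(T, π; l, k)`. -/
def Cset (lam : NPartition n) (T : ℕ → ℕ → ℕ) (p : ℕ → ℕ) (l k : ℕ) : Set ℕ :=
  if l = lam.part 1 then {keyTab lam p l k}
  else if keyTab lam p l k < mEast T (remnant lam T l k) (lam.part 1) l then (∅ : Set ℕ)
  else if mEast T (remnant lam T l k) (lam.part 1) l = keyTab lam p l k then
    Set.Icc k (min (keyTab lam p l k) (min (south lam T l k - 1) (east lam T l k)))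
  else {keyTab lam p l k} ∩ Set.Icc k (min (south lam T l k - 1) (east lam T l k))

/-- The row index `a(l,k;j)`:  the `i` with `(l-1,k) ∈ P(T;j,i)`
(convention `a(l,k;l) = k`). -/
def aIdx (lam : NPartition n) (T : ℕ → ℕ → ℕ) (l k j : ℕ) : ℕ :=
  if j = l then k
  else ((Finset.Icc 1 (zeta lam j)).filter fun i => InScanPath lam T j i (l - 1) k).sup id

/-- The row index `b(l,k;j)`:  the `i` with `(l,k+1) ∈ P(T;j,i)` when `k < ζ_l`,
and `ζ_j + 1` when `k = ζ_l` (convention `b(l,k;l) = k+1`). -/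
def bIdx (lam : NPartition n) (T : ℕ → ℕ → ℕ) (l k j : ℕ) : ℕ :=
  if j = l then k + 1
  else if k = zeta lam l then zeta lam j + 1
  else ((Finset.Icc 1 (zeta lam j)).filter fun i => InScanPath lam T j i l (k + 1)).sup id

/-- `E(l,k;j,i)`:  the value of `T` at the box `(h,m)` of `P(T;j,i)` with `h < l`
maximal (convention `E(l,k;l,k) = k`). -/
def Epath (lam : NPartition n) (T : ℕ → ℕ → ℕ) (l k j i : ℕ) : ℕ :=
  if j = l then k
  else
    T (((scanPath lam T j i).filter fun h => decide (h < l)).foldr max 0)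
      (remnant lam T j i (((scanPath lam T j i).filter fun h => decide (h < l)).foldr max 0))

/-- The set `B_λ(T, π; l, k) = ⋂_{j=1}^{l} ⋃_{i=a(j)}^{b(j)-1} [E(l,k;j,i), Y_λ(π)(j,i)]`. -/
def Bset (lam : NPartition n) (T : ℕ → ℕ → ℕ) (p : ℕ → ℕ) (l k : ℕ) : Set ℕ :=
  {v | ∀ j, 1 ≤ j → j ≤ l →
    ∃ i, aIdx lam T l k j ≤ i ∧ i + 1 ≤ bIdx lam T l k j ∧
      Epath lam T l k j i ≤ v ∧ v ≤ keyTab lam p j i}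

/-! ### The left scanning method -/

/-- The largest row `r ≤ c j` of column `j` whose value is at most `x`. -/
def maxRow (T : ℕ → ℕ → ℕ) (c : ℕ → ℕ) (j x : ℕ) : ℕ :=
  ((Finset.Icc 1 (c j)).filter fun r => T j r ≤ x).sup id

/-- The rows of the maximizing weakly decreasing sequence through columns
`j, j-1, …, 1` with initial bound `x`, in a remnant with column lengths `c`. -/
def leftRows (T : ℕ → ℕ → ℕ) (c : ℕ → ℕ) : ℕ → ℕ → List ℕ
  | 0, _ => []
  | j + 1, x => maxRow T c (j + 1) x :: leftRows T c j (T (j + 1) (maxRow T c (j + 1) x))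

/-- The column-1 value at the end of the left scanning path originating at `(j, r)`. -/
def leftEndVal (T : ℕ → ℕ → ℕ) (c : ℕ → ℕ) (j r : ℕ) : ℕ :=
  T 1 ((leftRows T c j (T j r)).getLastD 0)

/-- Remove the left scanning path originating at `(l, c l)`, together with
all values beneath it, from the remnant `c`. -/
def leftRemovePath (T : ℕ → ℕ → ℕ) (c : ℕ → ℕ) (l : ℕ) : ℕ → ℕ :=
  fun j =>
    if 1 ≤ j ∧ j ≤ l then (leftRows T c l (T l (c l))).getD (l - j) 0 - 1 else c j

/-- Iterate left-path removal `r` times (always for column `l`). -/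
def leftRemnantIter (T : ℕ → ℕ → ℕ) (c0 : ℕ → ℕ) (l : ℕ) : ℕ → ℕ → ℕ
  | 0 => c0
  | r + 1 => leftRemovePath T (leftRemnantIter T c0 l r) l

/-- Column lengths of the left remnant used to compute `M(T; l, i)`:
`T` restricted to its first `l` columns with the left scanning paths
originating at `(l, ζ_l), …, (l, i+1)` (and everything beneath them) removed. -/
def leftRemnant (lam : NPartition n) (T : ℕ → ℕ → ℕ) (l i : ℕ) : ℕ → ℕ :=
  leftRemnantIter T (zeta lam) l (zeta lam l - i)

/-- The left scanning value `M(T; l, i)`. -/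
def leftScanValue (lam : NPartition n) (T : ℕ → ℕ → ℕ) (l i : ℕ) : ℕ :=
  leftEndVal T (leftRemnant lam T l i) l i

/-! ### The condition sets F and G -/

/-- The set `F_λ(T, σ; l, k)`. -/
def Fset (lam : NPartition n) (T : ℕ → ℕ → ℕ) (sg : ℕ → ℕ) (l k : ℕ) : Set ℕ :=
  if l = 1 then Set.Icc (keyTab lam sg 1 k) (south lam T 1 k - 1)
  else
    let U := leftRemnant lam T l k
    let q := maxRow T U (l - 1) (south lam T l k - 1)
    let P := (Finset.Icc 1 q).filter fun h => keyTab lam sg l k ≤ leftEndVal T U (l - 1) h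
    if hP : P.Nonempty then Set.Icc (T (l - 1) (P.min' hP)) (south lam T l k - 1)
    else (∅ : Set ℕ)

/-- The set `G_λ(T, σ; l, k)`. -/
def Gset (lam : NPartition n) (T : ℕ → ℕ → ℕ) (sg : ℕ → ℕ) (l k : ℕ) : Set ℕ :=
  if l = 1 then {keyTab lam sg 1 k}
  else
    let U := leftRemnant lam T l k
    let q := maxRow T U (l - 1) (south lam T l k - 1)
    let P := (Finset.Icc 1 q).filter fun h => leftEndVal T U (l - 1) h = keyTab lam sg l k
    if hP : P.Nonempty then
      Set.Icc (T (l - 1) (P.min' hP))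
        (min ((if P.max' hP + 1 ≤ U (l - 1) then T (l - 1) (P.max' hP + 1) else n + 1) - 1)
          (south lam T l k - 1))
    else (∅ : Set ℕ)

/-! ### Polynomials, divided differences, words -/

/-- Polynomials in the variables `X 1, …, X n` (indexed by `ℕ`) over `ℚ`. -/
abbrev Poly : Type := MvPolynomial ℕ ℚ

/-- The action of `s_i` on polynomials: interchange `x_i` and `x_{i+1}`. -/
def sOp (i : ℕ) (P : Poly) : Poly := rename (Equiv.swap i (i + 1)) P

/-- The divided difference operator
`ρ_i = (x_i - x_{i+1})⁻¹ ∘ (1 - s_i) ∘ x_i`, defined as the unique polynomial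
`Q` with `(x_i - x_{i+1}) Q = x_i P - s_i (x_i P)`. -/
def rhoOp (i : ℕ) (P : Poly) : Poly :=
  if h : ∃ Q : Poly, (X i - X (i + 1)) * Q = X i * P - sOp i (X i * P) then h.choose
  else 0

/-- The operator `ρ̄_i := ρ_i - 1`. -/
def rhoBarOp (i : ℕ) (P : Poly) : Poly := rhoOp i P - P

/-- Apply operators indexed by a word `[i_t, …, i_1]`, rightmost first:
`applyOps f [i_t, …, i_1] P = f i_t (⋯ (f i_1 P))`. -/
def applyOps (f : ℕ → Poly → Poly) : List ℕ → Poly → Poly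
  | [], P => P
  | i :: w, P => f i (applyOps f w P)

/-- The monomial `x_1^{λ_1} ⋯ x_n^{λ_n}`. -/
def lamMonomial (lam : NPartition n) : Poly :=
  ∏ i ∈ Finset.Icc 1 n, X i ^ lam.part i

/-- The weight monomial `x^T = ∏ x_i^{c_i}` of the filling `T`. -/
def weight (lam : NPartition n) (T : ℕ → ℕ → ℕ) : Poly :=
  ∏ b ∈ boxes lam, X (T b.1 b.2)

/-- The simple reflection `s_i` acting by value. -/
def swapVal (i v : ℕ) : ℕ := if v = i then i + 1 else if v = i + 1 then i else v

/-- The permutation `s_{i_t} ⋯ s_{i_1}.(1, 2, …, n)` obtained by applying the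
word `w = [i_t, …, i_1]` (rightmost letter first, each acting by value) to the
identity. -/
def permOfWord (w : List ℕ) : ℕ → ℕ := w.foldr (fun i f => swapVal i ∘ f) id

/-- `w` is a word in letters `s_1, …, s_{n-1}` producing `π` from `(1, …, n)`. -/
def WordFor (n : ℕ) (w : List ℕ) (p : ℕ → ℕ) : Prop :=
  (∀ i ∈ w, 1 ≤ i ∧ i + 1 ≤ n) ∧ ∀ t, 1 ≤ t → t ≤ n → permOfWord w t = p t

/-- `w` is a reduced word for `π`: it produces `π` with minimal length. -/
def IsReducedWord (n : ℕ) (w : List ℕ) (p : ℕ → ℕ) : Prop :=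
  WordFor n w p ∧ ∀ w' : List ℕ, WordFor n w' p → w.length ≤ w'.length

/-- The atom `c_λ(π;x) = ρ̄_{i_t} ⋯ ρ̄_{i_1} . x_1^{λ_1} ⋯ x_n^{λ_n}`, computed
from a choice of reduced word for `π` (it is independent of this choice). -/
def atomPoly (lam : NPartition n) (p : ℕ → ℕ) : Poly :=
  if h : ∃ w : List ℕ, IsReducedWord n w p then
    applyOps rhoBarOp h.choose (lamMonomial lam)
  else 0

/-! ### `S_n^λ` -/

/-- The set `Q_λ` of distinct column lengths of `λ`. -/
def Qset (lam : NPartition n) : Finset ℕ := (Finset.Icc 1 (lam.part 1)).image (zeta lam)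

/-- `π ∈ S_n^λ`: an `n`-permutation increasing on each block `[q_{r-1}+1, q_r]`
cut out by the column lengths of `λ` (equivalently, `π_i < π_j` whenever
`i < j` and no element of `Q_λ` lies in `[i, j)`). -/
def InSnLam (lam : NPartition n) (p : ℕ → ℕ) : Prop :=
  IsNPerm n p ∧ ∀ i j, 1 ≤ i → i < j → j ≤ n →
    (∀ q ∈ Qset lam, q < i ∨ j ≤ q) → p i < p j

end KeyPoly

namespace KeyPoly

private lemma getLastD_irrel {l : List ℕ} (hl : l ≠ []) (d d' : ℕ) :
    l.getLastD d = l.getLastD d' := by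
  cases l with
  | nil => exact absurd rfl hl
  | cons a t => rw [List.getLastD_cons, List.getLastD_cons]

private lemma find?_range'_min {p : ℕ → Bool} :
    ∀ {m s a : ℕ}, (List.range' s m).find? p = some a →
      ∀ x, s ≤ x → x < a → p x = false := by
  intro m
  induction m with
  | zero => intro s a h; simp [List.find?] at h
  | succ k ih =>
    intro s a h x hx1 hx2
    rw [List.range'_succ] at h
    by_cases hps : p s = true
    · rw [List.find?_cons_of_pos hps] at h
      have : a = s := by simpa using h.symm
      omega
    · rw [List.find?_cons_of_neg hps] at h
      rcases Nat.eq_or_lt_of_le hx1 with rfl | hlt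
      · simpa using hps
      · exact ih h x hlt hx2

private lemma pathColsAux_ne_nil (T : ℕ → ℕ → ℕ) (c : ℕ → ℕ) (maxCol fuel h : ℕ) :
    pathColsAux T c maxCol fuel h ≠ [] := by
  cases fuel with
  | zero => simp [pathColsAux]
  | succ m =>
    unfold pathColsAux
    cases nextCol T c maxCol h <;> simp

private lemma self_mem_pathColsAux (T : ℕ → ℕ → ℕ) (c : ℕ → ℕ) (maxCol fuel h : ℕ) :
    h ∈ pathColsAux T c maxCol fuel h := by
  cases fuel with
  | zero => simp [pathColsAux]
  | succ m =>
    unfold pathColsAux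
    cases nextCol T c maxCol h <;> simp

private lemma pathColsAux_last_val (T : ℕ → ℕ → ℕ) (c : ℕ → ℕ) (maxCol : ℕ) :
    ∀ fuel h, 0 < c h → h ≤ maxCol → maxCol - h ≤ fuel →
      T ((pathColsAux T c maxCol fuel h).getLastD h)
          (c ((pathColsAux T c maxCol fuel h).getLastD h))
        = ((Finset.Icc h maxCol).filter fun h' => 0 < c h').sup fun h' => T h' (c h') := by
  intro fuel
  induction fuel with
  | zero =>
    intro h hc hle hf
    have hhm : h = maxCol := by omega
    subst hhm
    have hlast : (pathColsAux T c h 0 h).getLastD h = h := by simp [pathColsAux]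
    rw [hlast, Finset.Icc_self, Finset.filter_singleton, if_pos hc, Finset.sup_singleton]
  | succ m ih =>
    intro h hc hle hf
    unfold pathColsAux
    rcases hn : nextCol T c maxCol h with _ | h'
    · -- no next column: the path is [h], and h carries the max
      have hnone := List.find?_eq_none.mp hn
      simp only [List.getLastD_cons, List.getLastD_nil]
      refine le_antisymm (Finset.le_sup (f := fun h' => T h' (c h')) ?_) (Finset.sup_le ?_)
      · rw [Finset.mem_filter, Finset.mem_Icc]; exact ⟨⟨le_rfl, hle⟩, hc⟩
      · intro x hx
        rw [Finset.mem_filter, Finset.mem_Icc] at hx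
        rcases Nat.eq_or_lt_of_le hx.1.1 with rfl | hlt
        · exact le_rfl
        · have hxmem : x ∈ List.range' (h + 1) (maxCol - h) := by
            rw [List.mem_range'_1]; omega
          have := hnone x hxmem
          simp only [decide_eq_true_eq] at this
          push_neg at this
          exact le_of_lt (this hx.2)
    · -- step to column h'
      have hp : 0 < c h' ∧ T h (c h) ≤ T h' (c h') := by
        have := List.find?_some hn
        simpa using this
      have hmem : h + 1 ≤ h' ∧ h' < h + 1 + (maxCol - h) := by
        have := List.mem_of_find?_eq_some hn
        rwa [List.mem_range'_1] at this
      have hh'le : h' ≤ maxCol := by omega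
      have hmin := find?_range'_min hn
      simp only [List.getLastD_cons]
      rw [getLastD_irrel (pathColsAux_ne_nil T c maxCol m h') h h']
      rw [ih h' hp.1 hh'le (by omega)]
      refine le_antisymm
        (Finset.sup_mono (Finset.filter_subset_filter _
          (Finset.Icc_subset_Icc_left (by omega)))) (Finset.sup_le ?_)
      intro x hx
      rw [Finset.mem_filter, Finset.mem_Icc] at hx
      have hh'mem : h' ∈ (Finset.Icc h' maxCol).filter fun h'' => 0 < c h'' := by
        rw [Finset.mem_filter, Finset.mem_Icc]; exact ⟨⟨le_rfl, hh'le⟩, hp.1⟩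
      have hsup' : T h' (c h') ≤
          ((Finset.Icc h' maxCol).filter fun h'' => 0 < c h'').sup fun h'' => T h'' (c h'') :=
        Finset.le_sup (f := fun h'' => T h'' (c h'')) hh'mem
      by_cases hxh' : h' ≤ x
      · refine Finset.le_sup (f := fun h'' => T h'' (c h'')) ?_
        rw [Finset.mem_filter, Finset.mem_Icc]; exact ⟨⟨hxh', hx.1.2⟩, hx.2⟩
      · push_neg at hxh'
        rcases Nat.eq_or_lt_of_le hx.1.1 with rfl | hlt
        · exact le_trans hp.2 hsup'
        · have hx' := hmin x (by omega) hxh'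
          rw [decide_eq_false_iff_not] at hx'
          push_neg at hx'
          exact le_trans (le_of_lt (hx' hx.2)) (le_trans hp.2 hsup')

private lemma remnantIter_self (T : ℕ → ℕ → ℕ) (c0 : ℕ → ℕ) (maxCol j : ℕ) :
    ∀ r, remnantIter T c0 maxCol j r j = c0 j - r := by
  intro r
  induction r with
  | zero => simp [remnantIter]
  | succ k ihk =>
    have hmem : j ∈ pathCols T (remnantIter T c0 maxCol j k) maxCol j :=
      self_mem_pathColsAux _ _ _ _ _
    simp only [remnantIter, removePath, if_pos hmem, ihk]
    omega

private lemma le_zeta_of_inShape (lam : NPartition n) {j i : ℕ}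
    (h : InShape lam j i) : i ≤ zeta lam j := by
  obtain ⟨hj, hi1, hin, hji⟩ := h
  have hsub : Finset.Icc 1 i ⊆ (Finset.Icc 1 n).filter fun i' => j ≤ lam.part i' := by
    intro x hx
    rw [Finset.mem_Icc] at hx
    rw [Finset.mem_filter, Finset.mem_Icc]
    exact ⟨⟨hx.1, le_trans hx.2 hin⟩, le_trans hji (lam.antitone hx.1 hx.2)⟩
  have := Finset.card_le_card hsub
  rw [Nat.card_Icc] at this
  unfold zeta
  omega

/-- Lemma 4.1.  `S(T; j, i) = m(T')`, where `T'` is obtained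
from the remnant `T^{(j;i)}` by removing its first `j - 1` columns. -/
theorem scanValue_eq_mEast (n : ℕ) (hn : 1 ≤ n) (lam : NPartition n)
    (T : ℕ → ℕ → ℕ) (hT : IsSSYT lam T) (j i : ℕ) (hbox : InShape lam j i) :
    scanValue lam T j i = mEast T (remnant lam T j i) (lam.part 1) (j - 1) := by
  obtain ⟨hj1, hi1, hin, hji⟩ := hbox
  have hiz : i ≤ zeta lam j := le_zeta_of_inShape lam ⟨hj1, hi1, hin, hji⟩
  have hjmax : j ≤ lam.part 1 := le_trans hji (lam.antitone le_rfl hi1)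
  have hcj : remnant lam T j i j = i := by
    unfold remnant
    rw [remnantIter_self]
    omega
  have hcpos : 0 < remnant lam T j i j := by omega
  have key := pathColsAux_last_val T (remnant lam T j i) (lam.part 1) (lam.part 1) j
    hcpos hjmax (by omega)
  unfold scanValue scanPath pathCols
  rw [key]
  unfold mEast
  have hj' : j - 1 + 1 = j := by omega
  rw [hj']
  have hTji : 1 ≤ T j i := (hT.1 j i ⟨hj1, hi1, hin, hji⟩).1
  have hle : 1 ≤ ((Finset.Icc j (lam.part 1)).filter fun h => 0 < remnant lam T j i h).sup
      fun h => T h (remnant lam T j i h) := by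
    have hjmem : j ∈ (Finset.Icc j (lam.part 1)).filter fun h => 0 < remnant lam T j i h := by
      rw [Finset.mem_filter, Finset.mem_Icc]; exact ⟨⟨le_rfl, hjmax⟩, hcpos⟩
    refine le_trans ?_ (Finset.le_sup (f := fun h => T h (remnant lam T j i h)) hjmem)
    show 1 ≤ T j (remnant lam T j i j)
    rw [hcj]; exact hTji
  exact (max_eq_right hle).symm

end KeyPoly
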